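/- Let S be a string of length n and P a pattern. The set of lexicographic ranks of suffixes of S that have P as a prefix forms a (possibly empty) contiguous interval in the lexicographic ordering of all suffixes of S. -/

import Mathlib

/-- The list of suffixes of `S`, sorted lexicographically. -/
def sortedSuffixes {α : Type*} [LinearOrder α] (S : List α) : List (List α) :=
  ((List.range S.length).map (fun i => S.drop i)).mergeSort (fun x y => decide (x ≤ y))

private lemma le_nil_eq {α : Type*} [LinearOrder α] (x : List α) (h : x ≤ []) : x = [] := by
  cases x with
  | nil => rfl
  | cons a t => exact absurd (List.Lex.nil) (not_lt.mpr h)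

private lemma prefix_mid {α : Type*} [LinearOrder α] (P : List α) :
    ∀ x y z : List α, x ≤ y → y ≤ z → P <+: x → P <+: z → P <+: y := by
  induction P with
  | nil => intro x y z _ _ _ _; exact List.nil_prefix
  | cons a P ih =>
    intro x y z hxy hyz hx hz
    obtain ⟨x', rfl, hx'⟩ : ∃ x', x = a :: x' ∧ P <+: x' := by
      cases x with
      | nil => exact absurd hx (by simp)
      | cons b t =>
        rw [List.cons_prefix_cons] at hx
        exact ⟨t, by rw [hx.1], hx.2⟩
    obtain ⟨z', rfl, hz'⟩ : ∃ z', z = a :: z' ∧ P <+: z' := by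
      cases z with
      | nil => exact absurd hz (by simp)
      | cons b t =>
        rw [List.cons_prefix_cons] at hz
        exact ⟨t, by rw [hz.1], hz.2⟩
    cases y with
    | nil => simp at hx; exact absurd (le_nil_eq _ hxy) (by simp)
    | cons b y' =>
      have hab : a = b := by
        rcases lt_trichotomy a b with h | h | h
        · exact absurd (List.Lex.rel h : (a :: z' : List α) < b :: y') (not_lt.mpr hyz)
        · exact h
        · exact absurd (List.Lex.rel h : (b :: y' : List α) < a :: x') (not_lt.mpr hxy)
      subst hab
      have h1 : x' ≤ y' := by
        by_contra h
        exact absurd (List.Lex.cons (not_le.mp h) : (a :: y' : List α) < a :: x')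
          (not_lt.mpr hxy)
      have h2 : y' ≤ z' := by
        by_contra h
        exact absurd (List.Lex.cons (not_le.mp h) : (a :: z' : List α) < a :: y')
          (not_lt.mpr hyz)
      rw [List.cons_prefix_cons]
      exact ⟨rfl, ih x' y' z' h1 h2 hx' hz'⟩

/-- the set of lexicographic ranks of suffixes of `S` having `P` as a prefix
forms a (possibly empty) contiguous interval. -/
theorem stmt2 {α : Type*} [LinearOrder α] (S P : List α)
    (hdist : ((List.range S.length).map (fun i => S.drop i)).Nodup) :
    ∃ lo hi : ℕ,
      (Finset.range S.length).filter (fun r => P <+: (sortedSuffixes S).getD r [])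
        = Finset.Ico lo hi := by
  set L := sortedSuffixes S with hL
  have hlen : L.length = S.length := by
    simp [hL, sortedSuffixes, List.length_mergeSort]
  have hsorted : L.Pairwise (· ≤ ·) := by
    have := List.pairwise_mergeSort (le := fun x y : List α => decide (x ≤ y))
      (fun a b c hab hbc => decide_eq_true (le_trans (of_decide_eq_true hab) (of_decide_eq_true hbc)))
      (fun a b => by simpa [Bool.or_eq_true, decide_eq_true_iff] using le_total a b)
      ((List.range S.length).map (fun i => S.drop i))
    exact this.imp (fun h => of_decide_eq_true h)
  have hmono : ∀ i j : ℕ, i ≤ j → (hj : j < S.length) → L.getD i [] ≤ L.getD j [] := by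
    intro i j hij hj
    have hi' : i < L.length := hlen ▸ lt_of_le_of_lt hij hj
    have hj' : j < L.length := hlen ▸ hj
    rw [List.getD_eq_getElem _ _ hi', List.getD_eq_getElem _ _ hj']
    exact hsorted.rel_get_of_le (show (⟨i, hi'⟩ : Fin L.length) ≤ ⟨j, hj'⟩ from hij)
  set s := (Finset.range S.length).filter (fun r => P <+: L.getD r []) with hs
  by_cases hne : s.Nonempty
  · refine ⟨s.min' hne, s.max' hne + 1, ?_⟩
    ext r
    simp only [Finset.mem_Ico, Nat.lt_succ_iff]
    constructor
    · intro hr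
      exact ⟨s.min'_le r hr, s.le_max' r hr⟩
    · rintro ⟨h1, h2⟩
      have hmin := Finset.mem_filter.mp (s.min'_mem hne)
      have hmax := Finset.mem_filter.mp (s.max'_mem hne)
      rw [Finset.mem_range] at hmin hmax
      rw [hs, Finset.mem_filter, Finset.mem_range]
      have hrn : r < S.length := lt_of_le_of_lt h2 hmax.1
      refine ⟨hrn, prefix_mid P _ _ _ (hmono _ _ h1 hrn) (hmono _ _ h2 hmax.1)
        hmin.2 hmax.2⟩
  · exact ⟨0, 0, by simp [Finset.not_nonempty_iff_eq_empty.mp hne]⟩
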